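/- In the group G_k on (Z/k)^{2k} × Z/k, any product of fewer than k commutators [g_1,g_1'][g_2,g_2']···[g_m,g_m'] with m < k, where each pair satisfies Σ_{i=1}^k (b_i(g_j) a_i(g_j') - b_i(g_j') a_i(g_j)) = 1 in Z/k, is a nontrivial element of G_k; in fact it equals (0,...,0,m) with 0 < m < k. -/

import Mathlib

/-- The group `G_k`: underlying set `(ℤ/k)^{2k} × ℤ/k`, with `a`-coordinates `a 0, …, a (k-1)`,
`b`-coordinates `b 0, …, b (k-1)` and a final coordinate `ε`. -/
@[ext] structure Gk (k : ℕ) where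
  a : Fin k → ZMod k
  b : Fin k → ZMod k
  ε : ZMod k

namespace Gk

variable {k : ℕ}

/-- The twisted multiplication
`(a,b,ε)·(a',b',ε') = (a+a', b+b', ε+ε'+∑ i, b i * a' i)`. -/
def gmul (x y : Gk k) : Gk k :=
  ⟨x.a + y.a, x.b + y.b, x.ε + y.ε + ∑ i, x.b i * y.a i⟩

def ginv (x : Gk k) : Gk k :=
  ⟨-x.a, -x.b, -x.ε + ∑ i, x.b i * x.a i⟩

instance : Group (Gk k) where
  mul := gmul
  one := ⟨0, 0, 0⟩
  inv := ginv
  mul_assoc x y z := by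
    show gmul (gmul x y) z = gmul x (gmul y z)
    simp only [gmul, mk.injEq, Pi.add_apply, add_mul, mul_add, Finset.sum_add_distrib]
    refine ⟨by ring, by ring, by ring⟩
  one_mul x := by
    show gmul ⟨0, 0, 0⟩ x = x
    ext <;> simp [gmul]
  mul_one x := by
    show gmul x ⟨0, 0, 0⟩ = x
    ext <;> simp [gmul]
  inv_mul_cancel x := by
    show gmul (ginv x) x = ⟨0, 0, 0⟩
    simp only [gmul, ginv, mk.injEq, Pi.neg_apply, neg_mul, Finset.sum_neg_distrib]
    refine ⟨by ring, by ring, by ring⟩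

@[simp] theorem mul_def (x y : Gk k) :
    x * y = ⟨x.a + y.a, x.b + y.b, x.ε + y.ε + ∑ i, x.b i * y.a i⟩ := rfl

@[simp] theorem one_def : (1 : Gk k) = ⟨0, 0, 0⟩ := rfl

end Gk

open scoped commutatorElement

theorem Gk.inv_def (x : Gk k) : x⁻¹ = Gk.ginv x := rfl

theorem Gk.commutator_eq (x y : Gk k) :
    ⁅x, y⁆ = Gk.mk 0 0 (∑ i, (x.b i * y.a i - y.b i * x.a i)) := by
  show x * y * x⁻¹ * y⁻¹ = _
  simp only [Gk.inv_def, Gk.ginv, Gk.mul_def]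
  ext i
  · simp
  · simp
  · simp only [Pi.add_apply, Pi.neg_apply]
    simp only [add_mul, mul_neg, neg_mul, Finset.sum_add_distrib,
      Finset.sum_neg_distrib, Finset.sum_sub_distrib]
    ring

theorem Gk.prod_central (n : ℕ) (c : Fin n → ZMod k) :
    (List.ofFn fun j => Gk.mk 0 0 (c j)).prod = Gk.mk 0 0 (∑ j, c j) := by
  induction n with
  | zero => simp [List.ofFn_zero]
  | succ n ih =>
    rw [List.ofFn_succ, List.prod_cons, ih, Fin.sum_univ_succ]
    ext i <;> simp

/-- Any product of `m < k` commutators `⁅g_1,g_1'⁆⋯⁅g_m,g_m'⁆` in `G_k` whose symplectic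
pairings `∑ i (b_i a_i' - b_i' a_i)` are all equal to `1` equals `(0,…,0,m)` and in
particular is a nontrivial element of `G_k`. -/
theorem Gk.prod_commutators_ne_one (k m : ℕ) (hm : 0 < m) (hmk : m < k)
    (g g' : Fin m → Gk k)
    (hpair : ∀ j, ∑ i, ((g j).b i * (g' j).a i - (g' j).b i * (g j).a i) = 1) :
    (List.ofFn (fun j => ⁅g j, g' j⁆)).prod = Gk.mk 0 0 (m : ZMod k) ∧
      (List.ofFn (fun j => ⁅g j, g' j⁆)).prod ≠ 1 := by
  have key : (List.ofFn (fun j => ⁅g j, g' j⁆)).prod = Gk.mk 0 0 (m : ZMod k) := by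
    have hfun : (fun j => ⁅g j, g' j⁆) = fun j : Fin m => Gk.mk 0 0 ((1 : ZMod k)) := by
      funext j
      rw [Gk.commutator_eq, hpair j]
    rw [hfun, Gk.prod_central]
    congr 1
    simp
  refine ⟨key, ?_⟩
  rw [key]
  haveI : NeZero k := ⟨by omega⟩
  intro h
  have h2 : (m : ZMod k) = 0 := by
    have := congrArg Gk.ε h
    simpa using this
  rw [ZMod.natCast_eq_zero_iff] at h2
  exact absurd (Nat.le_of_dvd hm h2) (by omega)
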